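/- For X ∈ J₃(K), the trace of the left Jordan multiplication operator L_X^∘ on J₃(K) equals (d_K + 1)·tr(X), and the trace of the left cross-multiplication operator L_X^× equals −(d_K/2)·tr(X), where d_K = dim_ℝ K. -/

import Mathlib

open Matrix

/-- `K` is a composition algebra over `F` (with conjugation `star` and norm
`N x = x * star x`): traces and norms are scalars, and the norm is multiplicative. -/
class IsCompAlg (F K : Type*) [Field F] [NonAssocRing K] [Module F K] [StarRing K] : Prop where
  central_trace : ∀ x : K, ∃ c : F, x + star x = c • (1 : K)
  central_norm : ∀ x : K, ∃ c : F, x * star x = c • (1 : K)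
  star_mul_self_comm : ∀ x : K, star x * x = x * star x
  norm_comp : ∀ x y : K, (x * y) * star (x * y) = (x * star x) * (y * star y)

variable (F : Type*) {K : Type*} [Field F] [CharZero F]
  [NonAssocRing K] [Module F K] [SMulCommClass F K K] [IsScalarTower F K K]
  [StarRing K]

/-- The bilinear form `(x|y) = ½ (x ȳ + conj (x ȳ))` on the composition algebra `K`. -/
noncomputable def bK (x y : K) : K := (2:F)⁻¹ • (x * star y + star (x * star y))

/-- The Jordan product `X ∘ Y = ½ (XY + YX)` on 3×3 matrices over `K`. -/
noncomputable def jord (X Y : Matrix (Fin 3) (Fin 3) K) : Matrix (Fin 3) (Fin 3) K :=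
  (2:F)⁻¹ • (X * Y + Y * X)

/-- The trace bilinear form `(X|Y) = tr (X ∘ Y)`. -/
noncomputable def jform (X Y : Matrix (Fin 3) (Fin 3) K) : K := (jord F X Y).trace

/-- The Freudenthal cross product
`X × Y = X∘Y − ½ (tr(X) Y + tr(Y) X − (tr(X)tr(Y) − (X|Y)) E)`. -/
noncomputable def cross (X Y : Matrix (Fin 3) (Fin 3) K) : Matrix (Fin 3) (Fin 3) K :=
  jord F X Y - (2:F)⁻¹ • (X.trace • Y + Y.trace • X
    - (X.trace * Y.trace - jform F X Y) • (1 : Matrix (Fin 3) (Fin 3) K))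

/-- The Freudenthal determinant `det X = ⅓ (X × X | X)`. -/
noncomputable def Det (X : Matrix (Fin 3) (Fin 3) K) : K :=
  (3:F)⁻¹ • jform F (cross F X X) X

namespace J3Aux
set_option linter.unusedSectionVars false
set_option maxHeartbeats 1000000

variable {K : Type*} [NonAssocRing K] [Module ℝ K]
  [SMulCommClass ℝ K K] [IsScalarTower ℝ K K] [StarRing K] [StarModule ℝ K]

/-- The hermitian 3×3 matrix with real diagonal `r` and upper entries `y 0, y 1, y 2`
at positions `(0,1), (0,2), (1,2)`. -/
noncomputable def herm3 (r : Fin 3 → ℝ) (y : Fin 3 → K) : Matrix (Fin 3) (Fin 3) K :=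
  !![r 0 • 1, y 0, y 1; star (y 0), r 1 • 1, y 2; star (y 1), star (y 2), r 2 • 1]

lemma herm3_mem (r : Fin 3 → ℝ) (y : Fin 3 → K) :
    herm3 r y ∈ selfAdjoint.submodule ℝ (Matrix (Fin 3) (Fin 3) K) := by
  refine selfAdjoint.mem_iff.2 ?_
  show (herm3 r y)ᴴ = herm3 r y
  ext i j
  fin_cases i <;> fin_cases j <;>
    simp [herm3, conjTranspose_apply, star_smul, star_one]

/-- row/column positions of the three upper off-diagonal entries -/
def pA : Fin 3 → Fin 3 := ![0, 0, 1]
def pB : Fin 3 → Fin 3 := ![1, 2, 2]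

variable {ι : Type*} [Fintype ι] [DecidableEq ι]

/-- the coordinates of a hermitian matrix -/
noncomputable def eL (φ : K →ₗ[ℝ] ℝ) (c : Module.Basis ι ℝ K) :
    ↥(selfAdjoint.submodule ℝ (Matrix (Fin 3) (Fin 3) K)) →ₗ[ℝ] (Fin 3 ⊕ Fin 3 × ι → ℝ) where
  toFun Y := Sum.elim (fun j => φ ((Y : Matrix (Fin 3) (Fin 3) K) j j))
    (fun q => c.repr ((Y : Matrix (Fin 3) (Fin 3) K) (pA q.1) (pB q.1)) q.2)
  map_add' Y Z := by
    funext i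
    cases i <;> simp [Matrix.add_apply]
  map_smul' t Y := by
    funext i
    cases i <;> simp [Matrix.smul_apply]

/-- reconstruction of a hermitian matrix from its coordinates -/
noncomputable def eInv (c : Module.Basis ι ℝ K) (g : Fin 3 ⊕ Fin 3 × ι → ℝ) :
    Matrix (Fin 3) (Fin 3) K :=
  herm3 (fun j => g (.inl j)) (fun p => ∑ i, g (.inr (p, i)) • c i)

/-- the coordinate linear equivalence -/
noncomputable def eEq (φ : K →ₗ[ℝ] ℝ) (c : Module.Basis ι ℝ K)
    (hφ1 : φ 1 = 1) (hreal : ∀ y : K, star y = y → y = φ y • 1) :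
    ↥(selfAdjoint.submodule ℝ (Matrix (Fin 3) (Fin 3) K)) ≃ₗ[ℝ] (Fin 3 ⊕ Fin 3 × ι → ℝ) :=
  { eL φ c with
    invFun := fun g => ⟨eInv c g, herm3_mem _ _⟩
    left_inv := by
      intro Y
      have hY : star (Y : Matrix (Fin 3) (Fin 3) K) = (Y : Matrix (Fin 3) (Fin 3) K) :=
        selfAdjoint.mem_iff.1 Y.2
      have hYe : ∀ a b : Fin 3, star ((Y : Matrix (Fin 3) (Fin 3) K) a b)
          = (Y : Matrix (Fin 3) (Fin 3) K) b a := by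
        intro a b
        conv_rhs => rw [← hY]
        rfl
      have hdiag : ∀ a : Fin 3, (Y : Matrix (Fin 3) (Fin 3) K) a a
          = φ ((Y : Matrix (Fin 3) (Fin 3) K) a a) • 1 :=
        fun a => hreal _ (hYe a a)
      have hsum : ∀ a b : Fin 3, ∑ i, (c.repr ((Y : Matrix (Fin 3) (Fin 3) K) a b) i) • c i
          = (Y : Matrix (Fin 3) (Fin 3) K) a b := fun a b => c.sum_repr _
      apply Subtype.ext
      show eInv c (eL φ c Y) = (Y : Matrix (Fin 3) (Fin 3) K)
      ext a b
      fin_cases a <;> fin_cases b <;>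
        simp [eInv, eL, herm3, pA, pB, hsum, hYe] <;>
        exact (hdiag _).symm
    right_inv := by
      intro g
      funext i
      cases i with
      | inl j =>
        show φ (eInv c g j j) = g (.inl j)
        have : eInv c g j j = g (.inl j) • 1 := by
          fin_cases j <;> simp [eInv, herm3]
        rw [this, φ.map_smul]
        simp [hφ1]
      | inr q =>
        show c.repr (eInv c g (pA q.1) (pB q.1)) q.2 = g (.inr q)
        obtain ⟨p, i⟩ := q
        have : eInv c g (pA p) (pB p) = ∑ i', g (.inr (p, i')) • c i' := by
          fin_cases p <;> simp [eInv, herm3, pA, pB]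
        rw [this]
        simp [Finsupp.single_apply] }

section key
variable (X : Matrix (Fin 3) (Fin 3) K) (x : Fin 3 → ℝ)
variable (hx : ∀ j, X j j = x j • 1)
include hx

lemma key_jord_diag (j : Fin 3) :
    jord ℝ X (herm3 (Pi.single j 1) 0) j j = x j • 1 := by
  fin_cases j <;>
  · simp only [jord, Matrix.smul_apply, Matrix.add_apply, Matrix.mul_apply,
      Fin.sum_univ_three]
    simp [herm3, Matrix.vecHead, Matrix.vecTail, hx, smul_mul_assoc, mul_smul_comm,
      smul_smul]
    module

lemma key_jord_off (p : Fin 3) (z : K) :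
    jord ℝ X (herm3 0 (fun p' => if p' = p then z else 0)) (pA p) (pB p)
      = ((2:ℝ)⁻¹ * (x (pA p) + x (pB p))) • z := by
  fin_cases p <;>
  · simp only [pA, pB, Matrix.cons_val_zero, Matrix.cons_val_one, Matrix.head_cons,
      Matrix.cons_val_two, Matrix.tail_cons, Fin.isValue]
    simp only [jord, Matrix.smul_apply, Matrix.add_apply, Matrix.mul_apply,
      Fin.sum_univ_three]
    simp [herm3, Matrix.vecHead, Matrix.vecTail, hx, smul_mul_assoc, mul_smul_comm,
      smul_smul, Fin.ext_iff]
    module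

omit hx in
lemma key_trace (j : Fin 3) : (herm3 (K := K) (Pi.single j 1) 0).trace = 1 := by
  fin_cases j <;>
  · simp only [Matrix.trace, Matrix.diag, Fin.sum_univ_three]
    simp [herm3, Matrix.vecHead, Matrix.vecTail]

omit hx in
lemma key_trace_off (p : Fin 3) (z : K) :
    (herm3 (K := K) 0 (fun p' => if p' = p then z else 0)).trace = 0 := by
  fin_cases p <;>
  · simp only [Matrix.trace, Matrix.diag, Fin.sum_univ_three]
    simp [herm3, Matrix.vecHead, Matrix.vecTail]

lemma key_Xtrace : X.trace = (x 0 + x 1 + x 2) • 1 := by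
  simp only [Matrix.trace, Matrix.diag, Fin.sum_univ_three]
  simp [hx, add_smul]

lemma key_jform_diag (j : Fin 3) :
    jform ℝ X (herm3 (Pi.single j 1) 0) = x j • 1 := by
  fin_cases j <;>
  · simp only [jform, jord, Matrix.trace, Matrix.diag, Matrix.smul_apply,
      Matrix.add_apply, Matrix.mul_apply, Fin.sum_univ_three]
    simp [herm3, Matrix.vecHead, Matrix.vecTail, hx, smul_mul_assoc, mul_smul_comm,
      smul_smul]
    module

lemma key_cross_diag (j : Fin 3) :
    cross ℝ X (herm3 (Pi.single j 1) 0) j j = 0 := by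
  have h1 := key_jord_diag X x hx j
  have h2 := key_jform_diag X x hx j
  have h3 := key_trace (K := K) j
  have h4 := key_Xtrace X x hx
  simp only [cross, Matrix.sub_apply, Matrix.smul_apply, Matrix.add_apply]
  rw [h1, h2, h3, h4]
  have h5 : herm3 (K := K) (Pi.single j 1) 0 j j = (1:ℝ) • 1 := by
    fin_cases j <;> simp [herm3, Matrix.vecHead, Matrix.vecTail]
  have h6 : (1 : Matrix (Fin 3) (Fin 3) K) j j = 1 := Matrix.one_apply_eq j
  rw [h5, h6]
  simp [smul_eq_mul, smul_mul_assoc, mul_smul_comm, smul_smul, hx, sub_smul, add_smul,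
    smul_sub, smul_add, mul_one, one_mul, add_mul, mul_add]
  module

lemma key_cross_off (p : Fin 3) (z : K) :
    cross ℝ X (herm3 0 (fun p' => if p' = p then z else 0)) (pA p) (pB p)
      = ((2:ℝ)⁻¹ * (x (pA p) + x (pB p)) - (2:ℝ)⁻¹ * (x 0 + x 1 + x 2)) • z := by
  have h1 := key_jord_off X x hx p z
  have h3 := key_trace_off (K := K) p z
  have h4 := key_Xtrace X x hx
  simp only [cross, Matrix.sub_apply, Matrix.smul_apply, Matrix.add_apply]
  rw [h1, h3, h4]
  have h5 : herm3 (K := K) 0 (fun p' => if p' = p then z else 0) (pA p) (pB p) = z := by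
    fin_cases p <;> simp [herm3, pA, pB, Matrix.vecHead, Matrix.vecTail]
  have h6 : (1 : Matrix (Fin 3) (Fin 3) K) (pA p) (pB p) = 0 := by
    fin_cases p <;> simp [pA, pB, Matrix.one_apply]
  rw [h5, h6]
  simp [smul_eq_mul, smul_mul_assoc, mul_smul_comm, smul_smul, hx, sub_smul, add_smul,
    smul_sub, smul_add, mul_one, one_mul, add_mul, mul_add]
end key

end J3Aux

set_option maxHeartbeats 1000000 in
/-- The traces of the left Jordan and cross multiplication operators `L_X^∘` and
`L_X^×` on `J₃(K)` are `(d_K + 1)·tr(X)` and `−(d_K/2)·tr(X)` respectively. -/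
theorem trace_mulLeft_jord {K : Type*} [NonAssocRing K] [Module ℝ K]
    [SMulCommClass ℝ K K] [IsScalarTower ℝ K K] [StarRing K] [StarModule ℝ K]
    [FiniteDimensional ℝ K] [IsCompAlg ℝ K]
    (hd : Module.finrank ℝ K = 1 ∨ Module.finrank ℝ K = 2 ∨
      Module.finrank ℝ K = 4 ∨ Module.finrank ℝ K = 8)
    (X : Matrix (Fin 3) (Fin 3) K) (hX : Xᴴ = X)
    (T T' : ↥(selfAdjoint.submodule ℝ (Matrix (Fin 3) (Fin 3) K)) →ₗ[ℝ]
      ↥(selfAdjoint.submodule ℝ (Matrix (Fin 3) (Fin 3) K)))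
    (hT : ∀ Y : ↥(selfAdjoint.submodule ℝ (Matrix (Fin 3) (Fin 3) K)),
      (T Y : Matrix (Fin 3) (Fin 3) K) = jord ℝ X (Y : Matrix (Fin 3) (Fin 3) K))
    (hT' : ∀ Y : ↥(selfAdjoint.submodule ℝ (Matrix (Fin 3) (Fin 3) K)),
      (T' Y : Matrix (Fin 3) (Fin 3) K) = cross ℝ X (Y : Matrix (Fin 3) (Fin 3) K)) :
    (LinearMap.trace ℝ _ T) • (1 : K) = ((Module.finrank ℝ K : ℝ) + 1) • X.trace ∧
    (LinearMap.trace ℝ _ T') • (1 : K) = (-(Module.finrank ℝ K : ℝ) / 2) • X.trace := by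
  classical
  have hnt : Nontrivial K := Module.nontrivial_of_finrank_pos (R := ℝ)
    (by rcases hd with h | h | h | h <;> omega)
  set n := Module.finrank ℝ K with hn
  let c : Module.Basis (Fin n) ℝ K := Module.finBasis ℝ K
  obtain ⟨i₀, hi₀⟩ : ∃ i, c.repr 1 i ≠ 0 := by
    by_contra h
    push_neg at h
    have h0 : c.repr 1 = 0 := Finsupp.ext h
    have h1 : (1 : K) = 0 := by
      refine c.repr.injective ?_
      rw [h0]
      exact (map_zero _).symm
    exact one_ne_zero h1
  set φ : K →ₗ[ℝ] ℝ := (c.repr 1 i₀)⁻¹ • (c.coord i₀) with hφdef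
  have hφ1 : φ 1 = 1 := by
    simp [hφdef, Module.Basis.coord_apply, inv_mul_cancel₀ hi₀]
  have hreal : ∀ y : K, star y = y → y = φ y • 1 := by
    intro y hy
    obtain ⟨r, hr⟩ := IsCompAlg.central_trace (F := ℝ) y
    rw [hy] at hr
    have h2 : y = ((2:ℝ)⁻¹ * r) • 1 := by
      have h3 : (2:ℝ) • y = r • 1 := by rw [two_smul]; exact hr
      calc y = (2:ℝ)⁻¹ • ((2:ℝ) • y) := by rw [smul_smul]; norm_num
        _ = ((2:ℝ)⁻¹ * r) • 1 := by rw [h3, smul_smul]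
    have h4 : φ y = (2:ℝ)⁻¹ * r := by
      rw [h2, φ.map_smul, hφ1, smul_eq_mul, mul_one]
    rw [h4]; exact h2
  set x : Fin 3 → ℝ := fun j => φ (X j j) with hxdef
  have hx : ∀ j, X j j = x j • 1 := by
    intro j
    refine hreal _ ?_
    conv_rhs => rw [← hX]
    rfl
  set e := J3Aux.eEq φ c hφ1 hreal with hedef
  set b := Module.Basis.ofEquivFun e with hbdef
  -- evaluation of e
  have heval1 : ∀ (Z : ↥(selfAdjoint.submodule ℝ (Matrix (Fin 3) (Fin 3) K))) (j : Fin 3),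
      e Z (.inl j) = φ ((Z : Matrix (Fin 3) (Fin 3) K) j j) := fun _ _ => rfl
  have heval2 : ∀ (Z : ↥(selfAdjoint.submodule ℝ (Matrix (Fin 3) (Fin 3) K)))
      (p : Fin 3) (i : Fin n),
      e Z (.inr (p, i)) = c.repr ((Z : Matrix (Fin 3) (Fin 3) K) (J3Aux.pA p) (J3Aux.pB p)) i :=
    fun _ _ _ => rfl
  -- the basis vectors
  have hbl : ∀ j : Fin 3, (b (.inl j) : Matrix (Fin 3) (Fin 3) K)
      = J3Aux.herm3 (Pi.single j 1) 0 := by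
    intro j
    have h1 : b (.inl j) = e.symm (Pi.single (.inl j) 1) := by
      rw [hbdef]; simp
    rw [h1]
    show J3Aux.eInv c (Pi.single (Sum.inl j) 1) = _
    unfold J3Aux.eInv
    refine congrArg₂ J3Aux.herm3 ?_ ?_
    · funext j'
      simp [Pi.single_apply, Sum.inl.injEq]
    · funext p
      simp [Pi.single_apply]
  have hbr : ∀ (p : Fin 3) (i : Fin n), (b (.inr (p, i)) : Matrix (Fin 3) (Fin 3) K)
      = J3Aux.herm3 0 (fun p' => if p' = p then c i else 0) := by
    intro p i
    have h1 : b (.inr (p, i)) = e.symm (Pi.single (.inr (p, i)) 1) := by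
      rw [hbdef]; simp
    rw [h1]
    show J3Aux.eInv c (Pi.single (Sum.inr (p, i)) 1) = _
    unfold J3Aux.eInv
    refine congrArg₂ J3Aux.herm3 ?_ ?_
    · funext j'
      simp [Pi.single_apply]
    · funext p'
      by_cases hp : p' = p
      · subst hp
        simp [Pi.single_apply, Prod.ext_iff, ite_smul, Finset.sum_ite_eq']
      · simp [Pi.single_apply, Prod.ext_iff, hp]
  -- trace formula
  have htr : ∀ (S : ↥(selfAdjoint.submodule ℝ (Matrix (Fin 3) (Fin 3) K)) →ₗ[ℝ]
      ↥(selfAdjoint.submodule ℝ (Matrix (Fin 3) (Fin 3) K))),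
      LinearMap.trace ℝ _ S = ∑ i : Fin 3 ⊕ Fin 3 × Fin n, e (S (b i)) i := by
    intro S
    rw [LinearMap.trace_eq_matrix_trace ℝ b S, Matrix.trace]
    congr 1
    funext i
    simp [Matrix.diag, LinearMap.toMatrix_apply, hbdef]
  -- the sums
  have hsum1 : LinearMap.trace ℝ _ T = ((n : ℝ) + 1) * (x 0 + x 1 + x 2) := by
    rw [htr T, Fintype.sum_sum_type]
    have hA : ∀ j : Fin 3, e (T (b (.inl j))) (.inl j) = x j := by
      intro j
      rw [heval1, hT, hbl, J3Aux.key_jord_diag X x hx j, φ.map_smul, hφ1,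
        smul_eq_mul, mul_one]
    have hB : ∀ (p : Fin 3) (i : Fin n), e (T (b (.inr (p, i)))) (.inr (p, i))
        = (2:ℝ)⁻¹ * (x (J3Aux.pA p) + x (J3Aux.pB p)) := by
      intro p i
      rw [heval2, hT, hbr, J3Aux.key_jord_off X x hx p (c i)]
      simp
    have e1 : ∑ j : Fin 3, e (T (b (.inl j))) (.inl j) = ∑ j : Fin 3, x j :=
      Finset.sum_congr rfl (fun j _ => hA j)
    have e2 : ∑ q : Fin 3 × Fin n, e (T (b (.inr q))) (.inr q)
        = ∑ q : Fin 3 × Fin n, (2:ℝ)⁻¹ * (x (J3Aux.pA q.1) + x (J3Aux.pB q.1)) :=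
      Finset.sum_congr rfl (fun q _ => hB q.1 q.2)
    rw [e1, e2, Fintype.sum_prod_type]
    simp only [Finset.sum_const, Finset.card_univ, Fintype.card_fin, nsmul_eq_mul]
    rw [Fin.sum_univ_three, Fin.sum_univ_three]
    simp only [J3Aux.pA, J3Aux.pB, Matrix.cons_val_zero, Matrix.cons_val_one,
      Matrix.head_cons, Matrix.cons_val_two, Matrix.tail_cons]
    ring
  have hsum2 : LinearMap.trace ℝ _ T' = -(n : ℝ) / 2 * (x 0 + x 1 + x 2) := by
    rw [htr T', Fintype.sum_sum_type]
    have hA : ∀ j : Fin 3, e (T' (b (.inl j))) (.inl j) = 0 := by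
      intro j
      rw [heval1, hT', hbl, J3Aux.key_cross_diag X x hx j, map_zero]
    have hB : ∀ (p : Fin 3) (i : Fin n), e (T' (b (.inr (p, i)))) (.inr (p, i))
        = (2:ℝ)⁻¹ * (x (J3Aux.pA p) + x (J3Aux.pB p)) - (2:ℝ)⁻¹ * (x 0 + x 1 + x 2) := by
      intro p i
      rw [heval2, hT', hbr, J3Aux.key_cross_off X x hx p (c i)]
      simp
    have e1 : ∑ j : Fin 3, e (T' (b (.inl j))) (.inl j) = 0 :=
      Finset.sum_eq_zero (fun j _ => hA j)
    have e2 : ∑ q : Fin 3 × Fin n, e (T' (b (.inr q))) (.inr q)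
        = ∑ q : Fin 3 × Fin n, ((2:ℝ)⁻¹ * (x (J3Aux.pA q.1) + x (J3Aux.pB q.1))
            - (2:ℝ)⁻¹ * (x 0 + x 1 + x 2)) :=
      Finset.sum_congr rfl (fun q _ => hB q.1 q.2)
    rw [e1, e2, Fintype.sum_prod_type]
    simp only [Finset.sum_const, Finset.card_univ, Fintype.card_fin, nsmul_eq_mul]
    rw [Fin.sum_univ_three]
    simp only [J3Aux.pA, J3Aux.pB, Matrix.cons_val_zero, Matrix.cons_val_one,
      Matrix.head_cons, Matrix.cons_val_two, Matrix.tail_cons]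
    ring
  have hXt := J3Aux.key_Xtrace X x hx
  constructor
  · rw [hsum1, hXt, smul_smul]
  · rw [hsum2, hXt, smul_smul]
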